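/- Let n ≥ 1 and k ≥ 2 be integers, and let T(n,k) be the graph on vertex set {1, 2, …, n} in which distinct vertices a and b are adjacent if and only if a ≢ b (mod k). Then the cutwidth of T(n,k) satisfies cw(T(n,k)) ≥ ((k−1)/k)·n²/4 − n/2 − 3k/(4(k−1)). -/

import Mathlib

open Finset

variable {V : Type*}

/-- The number of edges crossing position `i` in the linear ordering `f`. -/
def SimpleGraph.cutAt [Fintype V] [DecidableEq V] (G : SimpleGraph V) [DecidableRel G.Adj]
    (f : V ≃ Fin (Fintype.card V)) (i : Fin (Fintype.card V)) : ℕ :=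
  (G.edgeFinset.filter (fun e => ∃ u ∈ e, ∃ v ∈ e, f u ≤ i ∧ i < f v)).card

/-- The cutwidth of a finite simple graph. -/
noncomputable def SimpleGraph.cutwidth [Fintype V] [DecidableEq V] (G : SimpleGraph V)
    [DecidableRel G.Adj] : ℕ :=
  sInf { m | ∃ f : V ≃ Fin (Fintype.card V), m = Finset.univ.sup (fun i => G.cutAt f i) }

/-- The degeneracy of a finite simple graph. -/
noncomputable def SimpleGraph.degeneracy [Fintype V] [DecidableEq V] (G : SimpleGraph V)
    [DecidableRel G.Adj] : ℕ :=
  sSup { k | ∃ s : Finset V, s.Nonempty ∧ ∀ v ∈ s, k ≤ (s.filter (G.Adj v)).card }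

/-- Number of edges of the induced subgraph on `s`. -/
def SimpleGraph.inducedEdgeCount [Fintype V] [DecidableEq V] (G : SimpleGraph V)
    [DecidableRel G.Adj] (s : Finset V) : ℕ :=
  (G.edgeFinset.filter (fun e => ∀ u ∈ e, u ∈ s)).card

/-- `(ρ, λ)`-uniform sparsity. -/
def SimpleGraph.UniformlySparse [Fintype V] [DecidableEq V] (G : SimpleGraph V)
    [DecidableRel G.Adj] (ρ lam : ℝ) : Prop :=
  ∀ s : Finset V, ρ * (Fintype.card V : ℝ) ≤ (s.card : ℝ) →
    (G.inducedEdgeCount s : ℝ) ≤ (s.card : ℝ) * ((s.card : ℝ) - 1) / (2 * lam)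

/-- The graph on `{1,…,n}` (realized as `Fin n`, vertex `j : Fin n` standing for `j+1`) where
distinct `a`, `b` are adjacent iff `a ≢ b (mod k)`; note `a ≢ b (mod k) ↔ a−1 ≢ b−1 (mod k)`,
so taking residues of the `Fin`-values is equivalent. It is isomorphic to the Turán graph. -/
def turanMod (n k : ℕ) : SimpleGraph (Fin n) where
  Adj a b := (a : ℕ) % k ≠ (b : ℕ) % k
  symm := ⟨fun a b h => h.symm⟩
  loopless := ⟨fun a h => h rfl⟩

instance (n k : ℕ) : DecidableRel (turanMod n k).Adj :=
  fun a b => inferInstanceAs (Decidable ((a : ℕ) % k ≠ (b : ℕ) % k))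

lemma classCard_le (n k j : ℕ) (hk : 1 ≤ k) :
    ((univ : Finset (Fin n)).filter (fun x : Fin n => (x : ℕ) % k = j)).card ≤ n / k + 1 := by
  classical
  rw [show n / k + 1 = (Finset.range (n / k + 1)).card from (Finset.card_range _).symm]
  apply Finset.card_le_card_of_injOn (fun x : Fin n => (x : ℕ) / k) (fun x _ => by
      simp only [Finset.mem_coe, Finset.coe_range, Set.mem_Iio, mem_range]
      have hxn : (x : ℕ) < n := x.isLt
      have h2 : (x : ℕ) / k ≤ n / k := Nat.div_le_div_right (le_of_lt hxn)
      omega)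

  intro a ha b hb hab
  simp only [coe_filter, Set.mem_setOf_eq, mem_univ, true_and] at ha hb
  simp only at hab
  have h1 := Nat.div_add_mod (a : ℕ) k
  have h2 := Nat.div_add_mod (b : ℕ) k
  rw [hab] at h1
  have : (a : ℕ) = b := by omega
  exact Fin.val_injective this

lemma sum_classCard (n k : ℕ) (hk : 1 ≤ k) :
    ∑ j ∈ range k, ((univ : Finset (Fin n)).filter (fun x : Fin n => (x : ℕ) % k = j)).card = n := by
  classical
  rw [← Finset.card_eq_sum_card_fiberwise (f := fun x : Fin n => (x : ℕ) % k)
    (t := range k) (fun x _ => mem_range.mpr (Nat.mod_lt _ (by omega))), Finset.card_univ,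
    Fintype.card_fin]

lemma turanMod_key (n k : ℕ) (hn : 2 ≤ n) (hk : 2 ≤ k)
    (f : Fin n ≃ Fin (Fintype.card (Fin n))) :
    ∃ i, 4 * ((n / 2) * (n - n / 2)) ≤
      4 * (turanMod n k).cutAt f i + (n / k + 1) * n := by
  classical
  set m := n / 2 with hm
  have hm1 : 1 ≤ m := by omega
  have hmn : m - 1 < Fintype.card (Fin n) := by rw [Fintype.card_fin]; omega
  set i : Fin (Fintype.card (Fin n)) := ⟨m - 1, hmn⟩ with hidef
  refine ⟨i, ?_⟩
  set G := turanMod n k with hG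
  set S : Finset (Fin n) := univ.filter (fun v => f v ≤ i) with hSdef
  set T : Finset (Fin n) := univ.filter (fun v => i < f v) with hTdef
  have hS : S.card = m := by
    have h1 : S.card = (univ.filter (fun j : Fin (Fintype.card (Fin n)) => j ≤ i)).card := by
      apply Finset.card_bij (fun v _ => f v)
      · intro v hv
        simp only [hSdef, mem_filter, mem_univ, true_and] at hv ⊢
        exact hv
      · intro a _ b _ hab
        exact f.injective hab
      · intro j hj
        refine ⟨f.symm j, ?_, by simp⟩
        simp only [hSdef, mem_filter, mem_univ, true_and, Equiv.apply_symm_apply]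
        simpa using hj
    rw [h1, show (univ.filter (fun j : Fin _ => j ≤ i)) = Finset.Iic i from by ext x; simp,
      Fin.card_Iic, hidef]
    show m - 1 + 1 = m
    omega
  have hST : S.card + T.card = n := by
    have h := Finset.card_filter_add_card_filter_not
      (s := (univ : Finset (Fin n))) (p := fun v => f v ≤ i)
    simp only [not_le] at h
    exact h.trans (Finset.card_univ.trans (Fintype.card_fin n))
  have hT : T.card = n - m := by omega
  have hDisj : Disjoint S T := by
    rw [Finset.disjoint_left]
    intro v hv hv'
    simp only [hSdef, hTdef, mem_filter, mem_univ, true_and] at hv hv'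
    exact absurd hv (not_le.mpr hv')
  set P := (S ×ˢ T).filter (fun p => G.Adj p.1 p.2) with hPdef
  set Q := (S ×ˢ T).filter (fun p => (p.1 : ℕ) % k = (p.2 : ℕ) % k) with hQdef
  -- P injects into the cut
  have hPcut : P.card ≤ G.cutAt f i := by
    apply Finset.card_le_card_of_injOn (fun p => s(p.1, p.2))
    · intro p hp
      simp only [Finset.mem_coe, hPdef, mem_filter, mem_product, hSdef, hTdef, mem_univ, true_and] at hp
      obtain ⟨⟨h1, h2⟩, hadj⟩ := hp
      simp only [Finset.mem_coe, Finset.mem_filter]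
      refine ⟨SimpleGraph.mem_edgeFinset.mpr hadj,
        p.1, ?_, p.2, ?_, h1, h2⟩
      · exact Sym2.mem_mk_left _ _
      · exact Sym2.mem_mk_right _ _
    · intro p hp q hq h
      simp only [hPdef, mem_filter, mem_product, hSdef, hTdef, mem_univ, true_and,
        coe_filter, Set.mem_setOf_eq] at hp hq
      simp only [Sym2.eq, Sym2.rel_iff', Prod.mk.injEq, Prod.swap_prod_mk] at h
      obtain ⟨⟨hp1, hp2⟩, -⟩ := hp
      obtain ⟨⟨hq1, hq2⟩, -⟩ := hq
      rcases h with ⟨h1, h2⟩ | ⟨h1, h2⟩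
      · exact Prod.ext h1 h2
      · exfalso
        rw [← h1] at hq2
        exact absurd hp1 (not_le.mpr hq2)
  -- P + Q = m * (n - m)
  have hPQ : P.card + Q.card = m * (n - m) := by
    have h := Finset.card_filter_add_card_filter_not
      (s := S ×ˢ T) (p := fun p => G.Adj p.1 p.2)
    have hneg : (S ×ˢ T).filter (fun p => ¬ G.Adj p.1 p.2) = Q := by
      apply Finset.filter_congr
      intro p _
      simp [hG, turanMod, not_not]
    rw [hneg] at h
    rw [h, Finset.card_product, hS, hT]
  -- bound Q
  have hQle : 4 * Q.card ≤ (n / k + 1) * n := by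
    have step1 : Q.card ≤ ∑ j ∈ range k,
        ((S.filter (fun v : Fin n => (v : ℕ) % k = j)).card *
          (T.filter (fun v : Fin n => (v : ℕ) % k = j)).card) := by
      calc Q.card ≤ ((range k).biUnion (fun j =>
            (S.filter (fun v : Fin n => (v : ℕ) % k = j)) ×ˢ
              (T.filter (fun v : Fin n => (v : ℕ) % k = j)))).card := by
            apply Finset.card_le_card
            intro p hp
            simp only [hQdef, mem_filter, mem_product] at hp
            obtain ⟨⟨h1, h2⟩, he⟩ := hp
            apply Finset.mem_biUnion.mpr
            refine ⟨(p.1 : ℕ) % k, mem_range.mpr (Nat.mod_lt _ (by omega)), ?_⟩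
            rw [Finset.mem_product]
            exact ⟨Finset.mem_filter.mpr ⟨h1, rfl⟩, Finset.mem_filter.mpr ⟨h2, he.symm⟩⟩
        _ ≤ ∑ j ∈ range k, ((S.filter (fun v : Fin n => (v : ℕ) % k = j)) ×ˢ
              (T.filter (fun v : Fin n => (v : ℕ) % k = j))).card := Finset.card_biUnion_le
        _ = _ := by simp [Finset.card_product]
    have step2 : ∀ j ∈ range k,
        4 * ((S.filter (fun v : Fin n => (v : ℕ) % k = j)).card *
          (T.filter (fun v : Fin n => (v : ℕ) % k = j)).card) ≤
        (n / k + 1) * ((univ : Finset (Fin n)).filter (fun x : Fin n => (x : ℕ) % k = j)).card := by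
      intro j _
      set a := (S.filter (fun v : Fin n => (v : ℕ) % k = j)).card
      set b := (T.filter (fun v : Fin n => (v : ℕ) % k = j)).card
      set c := ((univ : Finset (Fin n)).filter (fun x : Fin n => (x : ℕ) % k = j)).card with hc
      have hab : a + b ≤ c := by
        rw [← Finset.card_union_of_disjoint
          (hDisj.mono (Finset.filter_subset _ _) (Finset.filter_subset _ _))]
        apply Finset.card_le_card
        intro v hv
        simp only [Finset.mem_union, mem_filter, hc] at hv ⊢
        rcases hv with ⟨hvS, hvj⟩ | ⟨hvT, hvj⟩ <;> exact ⟨mem_univ v, hvj⟩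
      have h4 : 4 * (a * b) ≤ c * c := by
        zify
        nlinarith [sq_nonneg ((a : ℤ) - b), sq_nonneg ((a : ℤ) + b - c)]
      have hck : c ≤ n / k + 1 := classCard_le n k j (by omega)
      calc 4 * (a * b) ≤ c * c := h4
        _ ≤ (n / k + 1) * c := Nat.mul_le_mul_right c hck
    calc 4 * Q.card ≤ 4 * ∑ j ∈ range k, ((S.filter (fun v : Fin n => (v : ℕ) % k = j)).card *
          (T.filter (fun v : Fin n => (v : ℕ) % k = j)).card) := by omega
      _ = ∑ j ∈ range k, 4 * ((S.filter (fun v : Fin n => (v : ℕ) % k = j)).card *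
          (T.filter (fun v : Fin n => (v : ℕ) % k = j)).card) := Finset.mul_sum _ _ _
      _ ≤ ∑ j ∈ range k, (n / k + 1) *
          ((univ : Finset (Fin n)).filter (fun x : Fin n => (x : ℕ) % k = j)).card :=
            Finset.sum_le_sum step2
      _ = (n / k + 1) * ∑ j ∈ range k,
          ((univ : Finset (Fin n)).filter (fun x : Fin n => (x : ℕ) % k = j)).card :=
            (Finset.mul_sum _ _ _).symm
      _ = (n / k + 1) * n := by rw [sum_classCard n k (by omega)]
  linarith [hPcut, hPQ, hQle]

lemma cutwidth_nat_bound (n k : ℕ) (hn : 2 ≤ n) (hk : 2 ≤ k) :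
    4 * ((n / 2) * (n - n / 2)) ≤ 4 * (turanMod n k).cutwidth + (n / k + 1) * n := by
  classical
  unfold SimpleGraph.cutwidth
  have hne : {M | ∃ f : Fin n ≃ Fin (Fintype.card (Fin n)),
      M = Finset.univ.sup (fun i => (turanMod n k).cutAt f i)}.Nonempty :=
    ⟨_, Fintype.equivFin (Fin n), rfl⟩
  obtain ⟨f, hf⟩ := Nat.sInf_mem hne
  obtain ⟨i, hi⟩ := turanMod_key n k hn hk f
  have hle : (turanMod n k).cutAt f i ≤ sInf {M | ∃ f : Fin n ≃ Fin (Fintype.card (Fin n)),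
      M = Finset.univ.sup (fun i => (turanMod n k).cutAt f i)} := by
    rw [hf]
    exact Finset.le_sup (Finset.mem_univ i)
  linarith

/-- **Lower bound for the Turán-type graph.**
`cw(T(n,k)) ≥ ((k−1)/k) n²/4 − n/2 − 3k/(4(k−1))`. -/
theorem turanMod_cutwidth_ge (n k : ℕ) (hn : 1 ≤ n) (hk : 2 ≤ k) :
    ((turanMod n k).cutwidth : ℝ) ≥
      ((k : ℝ) - 1) / (k : ℝ) * (n : ℝ) ^ 2 / 4 - (n : ℝ) / 2
        - 3 * (k : ℝ) / (4 * ((k : ℝ) - 1)) := by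
  have hk2 : (2 : ℝ) ≤ (k : ℝ) := by exact_mod_cast hk
  have hk0 : (0 : ℝ) < (k : ℝ) := by linarith
  have hk1 : (0 : ℝ) < (k : ℝ) - 1 := by linarith
  have hfrac : 3 / 4 ≤ 3 * (k : ℝ) / (4 * ((k : ℝ) - 1)) := by
    rw [div_le_div_iff₀ (by norm_num) (by linarith)]
    nlinarith
  have hsplit : ((k : ℝ) - 1) / (k : ℝ) * (n : ℝ) ^ 2 / 4
      = (n : ℝ) ^ 2 / 4 - (n : ℝ) ^ 2 / (4 * (k : ℝ)) := by
    field_simp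
  rw [ge_iff_le]
  by_cases hn2 : n < 2
  · have hn1 : n = 1 := by omega
    subst hn1
    have h0 : (0 : ℝ) ≤ ((turanMod 1 k).cutwidth : ℝ) := Nat.cast_nonneg _
    have hle1 : ((k : ℝ) - 1) / (k : ℝ) ≤ 1 := by
      rw [div_le_one hk0]; linarith
    have h1 : ((1 : ℕ) : ℝ) = 1 := by norm_num
    rw [h1]
    nlinarith
  · push_neg at hn2
    have hkey := cutwidth_nat_bound n k hn2 hk
    set m := n / 2 with hm
    have hmn : n * n ≤ 4 * (m * (n - m)) + 1 := by
      have h1 : 2 * m + n % 2 = n := Nat.div_add_mod n 2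
      have h2 : n % 2 < 2 := Nat.mod_lt _ (by omega)
      have h3 : n - m = m + n % 2 := by omega
      rw [h3]
      set r := n % 2 with hr
      have h4 : n = 2 * m + r := by omega
      rw [h4]
      have h5 : r ≤ 1 := by omega
      nlinarith [h5]
    -- cast everything to ℝ
    have hR1 : ((n / k : ℕ) : ℝ) ≤ (n : ℝ) / (k : ℝ) := Nat.cast_div_le
    have hR2 : (n : ℝ) * n ≤ 4 * ((turanMod n k).cutwidth : ℝ)
        + (((n / k : ℕ) : ℝ) + 1) * n + 1 := by
      have c1 : ((4 * (m * (n - m)) : ℕ) : ℝ)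
          ≤ ((4 * (turanMod n k).cutwidth + (n / k + 1) * n : ℕ) : ℝ) := by
        exact_mod_cast hkey
      have c2 : ((n * n : ℕ) : ℝ) ≤ ((4 * (m * (n - m)) + 1 : ℕ) : ℝ) := by
        exact_mod_cast hmn
      push_cast at c1 c2
      linarith
    have hnn : (n : ℝ) ^ 2 = (n : ℝ) * n := sq (n : ℝ)
    have hq1 : ((n : ℝ) / k + 1) * n = (n : ℝ) ^ 2 / k + n := by ring
    have hq2 : (n : ℝ) ^ 2 / (k : ℝ) = 4 * ((n : ℝ) ^ 2 / (4 * (k : ℝ))) := by ring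
    have hn0 : (0 : ℝ) ≤ (n : ℝ) := Nat.cast_nonneg n
    have hR3 : (((n / k : ℕ) : ℝ) + 1) * n ≤ ((n : ℝ) / k + 1) * n := by
      apply mul_le_mul_of_nonneg_right _ hn0
      linarith
    linarith
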